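/- Let A be a commutative noetherian ring and f: M → N a homomorphism of finitely generated A-modules. If the maps G_f(P): G_M(P) → G_N(P) are injective for every finitely generated A-module P, then the induced map R(f): R(M) → R(N) of Rees algebras is injective (equivalently, the preimage of I(N) under Sym(f) equals I(M)). -/

import Mathlib

open Module LinearMap TensorProduct

/-- The relation on the tensor algebra whose quotient is the symmetric algebra. -/
inductive SymRel (A : Type) [CommRing A] (M : Type) [AddCommGroup M] [Module A M] :
    TensorAlgebra A M → TensorAlgebra A M → Prop
  | mul_comm (x y : M) : SymRel A M (TensorAlgebra.ι A x * TensorAlgebra.ι A y)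
      (TensorAlgebra.ι A y * TensorAlgebra.ι A x)

/-- The symmetric algebra `Sym(M)` of a module `M`. -/
abbrev SymmAlg (A : Type) [CommRing A] (M : Type) [AddCommGroup M] [Module A M] : Type :=
  RingQuot (SymRel A M)

variable {A : Type} [CommRing A] {M N L : Type} [AddCommGroup M] [Module A M]
  [AddCommGroup N] [Module A N] [AddCommGroup L] [Module A L]

private lemma symmAlg_comm_aux (x y : TensorAlgebra A M) :
    RingQuot.mkAlgHom A (SymRel A M) x * RingQuot.mkAlgHom A (SymRel A M) y =
      RingQuot.mkAlgHom A (SymRel A M) y * RingQuot.mkAlgHom A (SymRel A M) x := by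
  induction x using TensorAlgebra.induction with
  | algebraMap r => simp [Algebra.commutes]
  | ι m =>
    induction y using TensorAlgebra.induction with
    | algebraMap r => simp [Algebra.commutes]
    | ι n => simpa [map_mul] using (RingQuot.mkAlgHom_rel A (SymRel.mul_comm m n))
    | mul a b ha hb => rw [map_mul, ← mul_assoc, ha, mul_assoc, hb, ← mul_assoc]
    | add a b ha hb => rw [map_add, mul_add, add_mul, ha, hb]
  | mul a b ha hb => rw [map_mul, mul_assoc, hb, ← mul_assoc, ha, mul_assoc]
  | add a b ha hb => rw [map_add, add_mul, mul_add, ha, hb]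

noncomputable instance (A : Type) [CommRing A] (M : Type) [AddCommGroup M] [Module A M] :
    CommRing (SymmAlg A M) :=
  { (inferInstance : Ring (SymmAlg A M)) with
    mul_comm := fun a b => by
      obtain ⟨x, rfl⟩ := RingQuot.mkAlgHom_surjective A (SymRel A M) a
      obtain ⟨y, rfl⟩ := RingQuot.mkAlgHom_surjective A (SymRel A M) b
      exact symmAlg_comm_aux x y }

/-- The canonical inclusion of `M` into the degree-one part of `Sym(M)`. -/
noncomputable def symι (A : Type) [CommRing A] {M : Type} [AddCommGroup M] [Module A M] :
    M →ₗ[A] SymmAlg A M :=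
  (RingQuot.mkAlgHom A (SymRel A M)).toLinearMap ∘ₗ TensorAlgebra.ι A

/-- Functoriality of the symmetric algebra: `Sym(g) : Sym(M) → Sym(N)`. -/
noncomputable def symMap (A : Type) [CommRing A] {M N : Type} [AddCommGroup M] [Module A M]
    [AddCommGroup N] [Module A N] (g : M →ₗ[A] N) : SymmAlg A M →ₐ[A] SymmAlg A N :=
  RingQuot.liftAlgHom A ⟨TensorAlgebra.lift A ((symι A) ∘ₗ g), by
    intro x y h
    cases h with
    | mul_comm a b => simp [mul_comm]⟩

@[simp] lemma symMap_ι (g : M →ₗ[A] N) (m : M) :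
    symMap A g (symι A m) = symι A (g m) := by
  simp [symMap, symι, RingQuot.liftAlgHom_mkAlgHom_apply]

lemma symmAlg_hom_ext {B : Type} [Semiring B] [Algebra A B] {f g : SymmAlg A M →ₐ[A] B}
    (h : ∀ m : M, f (symι A m) = g (symι A m)) : f = g := by
  have key : f.comp (RingQuot.mkAlgHom A (SymRel A M)) =
      g.comp (RingQuot.mkAlgHom A (SymRel A M)) := by
    apply TensorAlgebra.hom_ext
    apply LinearMap.ext
    intro m
    simpa [symι] using h m
  apply AlgHom.ext
  intro x
  obtain ⟨x, rfl⟩ := RingQuot.mkAlgHom_surjective A (SymRel A M) x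
  exact AlgHom.congr_fun key x

lemma symMap_comp_apply (g : N →ₗ[A] L) (f : M →ₗ[A] N) (x : SymmAlg A M) :
    symMap A (g ∘ₗ f) x = symMap A g (symMap A f x) := by
  have : symMap A (g ∘ₗ f) = (symMap A g).comp (symMap A f) := by
    apply symmAlg_hom_ext
    intro m
    simp
  rw [this]; rfl

/-- The data of a linear map from `M` into a finitely generated free module. -/
structure FreeTarget (A : Type) [CommRing A] (M : Type) [AddCommGroup M] [Module A M] where
  E : Type
  [instAddCommGroup : AddCommGroup E]
  [instModule : Module A E]
  [instFree : Module.Free A E]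
  [instFinite : Module.Finite A E]
  g : M →ₗ[A] E

attribute [instance] FreeTarget.instAddCommGroup FreeTarget.instModule
  FreeTarget.instFree FreeTarget.instFinite

/-- The ideal `I(M) ⊆ Sym(M)`: the intersection over all maps `g : M → E` into finitely
generated free modules of the kernels of `Sym(g)`. -/
noncomputable def reesIdeal (A : Type) [CommRing A] (M : Type) [AddCommGroup M]
    [Module A M] : Ideal (SymmAlg A M) :=
  ⨅ d : FreeTarget A M, RingHom.ker (symMap A d.g)

lemma reesIdeal_le_comap (f : M →ₗ[A] N) :
    reesIdeal A M ≤ Ideal.comap (symMap A f) (reesIdeal A N) := by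
  intro x hx
  simp only [reesIdeal, Ideal.mem_iInf] at hx
  simp only [Ideal.mem_comap, reesIdeal, Ideal.mem_iInf]
  intro d
  have hd := hx ⟨d.E, d.g ∘ₗ f⟩
  rw [RingHom.mem_ker] at hd ⊢
  rw [← symMap_comp_apply]
  exact hd

/-- The Rees algebra `R(M) = Sym(M)/I(M)` of a module `M`. -/
noncomputable abbrev ReesAlg (A : Type) [CommRing A] (M : Type) [AddCommGroup M]
    [Module A M] : Type :=
  SymmAlg A M ⧸ reesIdeal A M

/-- The induced map `R(f) : R(M) → R(N)` of Rees algebras. -/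
noncomputable def reesMap (A : Type) [CommRing A] {M N : Type} [AddCommGroup M]
    [Module A M] [AddCommGroup N] [Module A N] (f : M →ₗ[A] N) :
    ReesAlg A M →ₐ[A] ReesAlg A N :=
  Ideal.quotientMapₐ (reesIdeal A N) (symMap A f) (reesIdeal_le_comap f)

open Module LinearMap TensorProduct

/-- The natural map `α_{M,P} : M ⊗ P → Hom(M*, P)`, `α(m ⊗ p)(λ) = λ(m) • p`. -/
noncomputable def alphaMap (A : Type) [CommRing A] (M P : Type) [AddCommGroup M]
    [Module A M] [AddCommGroup P] [Module A P] :
    M ⊗[A] P →ₗ[A] (Module.Dual A M →ₗ[A] P) :=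
  (dualTensorHom A (Module.Dual A M) P) ∘ₗ
    (TensorProduct.map (Module.Dual.eval A M) LinearMap.id)

/-- `G_M(P)` is the image of `α_{M,P} : M ⊗ P → Hom(M*, P)`. -/
noncomputable def GFun (A : Type) [CommRing A] (M P : Type) [AddCommGroup M] [Module A M]
    [AddCommGroup P] [Module A P] : Submodule A (Module.Dual A M →ₗ[A] P) :=
  LinearMap.range (alphaMap A M P)


section AuxStmt17

lemma alphaMap_tmul {P : Type} [AddCommGroup P] [Module A P] (m : M) (p : P)
    (lam : Module.Dual A M) :
    alphaMap A M P (m ⊗ₜ[A] p) lam = lam m • p := by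
  simp [alphaMap]

lemma dualMap_surjective_of_injOn [Module.Finite A M] (f : M →ₗ[A] N)
    (h : ∀ (P : Type) [AddCommGroup P] [Module A P] [Module.Finite A P],
      Set.InjOn (LinearMap.lcomp A P f.dualMap) (GFun A M P)) :
    Function.Surjective f.dualMap := by
  classical
  obtain ⟨r, m, hm⟩ := Module.Finite.exists_fin (R := A) (M := M)
  let β : Module.Dual A N →ₗ[A] (Fin r → A) :=
    { toFun := fun ν => fun i => ν (f (m i))
      map_add' := fun ν₁ ν₂ => by funext i; simp
      map_smul' := fun a ν => by funext i; simp }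
  have hβ : ∀ ν i, β ν i = ν (f (m i)) := fun _ _ => rfl
  let s : Submodule A (Fin r → A) := LinearMap.range β
  let P := (Fin r → A) ⧸ s
  haveI : Module.Finite A P := Module.Finite.of_surjective s.mkQ s.mkQ_surjective
  let t : M ⊗[A] P := ∑ i, m i ⊗ₜ[A] s.mkQ (Pi.single i 1)
  have ht : t = ∑ i, m i ⊗ₜ[A] s.mkQ (Pi.single i 1) := rfl
  have hα : ∀ lam : Module.Dual A M,
      alphaMap A M P t lam = s.mkQ (fun i => lam (m i)) := by
    intro lam
    have h1 : alphaMap A M P t lam = ∑ i, lam (m i) • s.mkQ (Pi.single i 1) := by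
      rw [ht, map_sum, LinearMap.sum_apply]
      exact Finset.sum_congr rfl fun i _ => alphaMap_tmul _ _ _
    have h2 : ∀ i : Fin r, lam (m i) • (Pi.single i 1 : Fin r → A) =
        (Pi.single i (lam (m i)) : Fin r → A) := by
      intro i; funext j
      by_cases hj : j = i <;> simp [Pi.single_apply, hj]
    calc alphaMap A M P t lam = ∑ i, lam (m i) • s.mkQ (Pi.single i 1) := h1
      _ = ∑ i, s.mkQ (lam (m i) • (Pi.single i 1 : Fin r → A)) := by
          exact Finset.sum_congr rfl fun i _ =>
            (map_smul s.mkQ (lam (m i)) (Pi.single i 1 : Fin r → A)).symm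
      _ = s.mkQ (∑ i, lam (m i) • (Pi.single i 1 : Fin r → A)) :=
          (map_sum s.mkQ (fun i => lam (m i) • (Pi.single i 1 : Fin r → A))
            Finset.univ).symm
      _ = s.mkQ (fun i => lam (m i)) := by
          congr 1
          rw [show (fun i => lam (m i) • (Pi.single i 1 : Fin r → A)) =
              fun i => (Pi.single i (lam (m i)) : Fin r → A) from funext h2]
          exact Finset.univ_sum_single _
  have htG : alphaMap A M P t ∈ (GFun A M P : Set _) := ⟨t, rfl⟩
  have h0G : (0 : Module.Dual A M →ₗ[A] P) ∈ (GFun A M P : Set _) :=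
    (GFun A M P).zero_mem
  have hk : LinearMap.lcomp A P f.dualMap (alphaMap A M P t) =
      LinearMap.lcomp A P f.dualMap 0 := by
    rw [map_zero]
    ext ν
    rw [LinearMap.lcomp_apply, hα, LinearMap.zero_apply]
    have h3 : (fun i => f.dualMap ν (m i)) = β ν := rfl
    rw [h3, Submodule.mkQ_apply, Submodule.Quotient.mk_eq_zero]
    exact ⟨ν, rfl⟩
  have ht0 : alphaMap A M P t = 0 := h P htG h0G hk
  intro lam
  have hz : s.mkQ (fun i => lam (m i)) = 0 := by
    rw [← hα, ht0]; rfl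
  rw [Submodule.mkQ_apply, Submodule.Quotient.mk_eq_zero] at hz
  obtain ⟨ν, hν⟩ := hz
  refine ⟨ν, ?_⟩
  refine LinearMap.ext_on hm ?_
  rintro y ⟨i, rfl⟩
  have := congrFun hν i
  simpa [LinearMap.dualMap_apply, hβ] using this

lemma exists_factor_of_dualMap_surjective (f : M →ₗ[A] N)
    (hsurj : Function.Surjective f.dualMap)
    (E : Type) [AddCommGroup E] [Module A E] [Module.Free A E] [Module.Finite A E]
    (g : M →ₗ[A] E) : ∃ g' : N →ₗ[A] E, g = g' ∘ₗ f := by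
  classical
  let b := Module.Free.chooseBasis A E
  choose ν hν using fun i => hsurj (b.coord i ∘ₗ g)
  refine ⟨∑ i, (ν i).smulRight (b i), ?_⟩
  ext x
  have hx : ∀ i, ν i (f x) = b.coord i (g x) := by
    intro i
    have := congrArg (fun φ : Module.Dual A M => φ x) (hν i)
    simpa [LinearMap.dualMap_apply] using this
  simp only [LinearMap.comp_apply, LinearMap.sum_apply, LinearMap.smulRight_apply]
  calc g x = ∑ i, b.repr (g x) i • b i := (b.sum_repr (g x)).symm
    _ = ∑ i, ν i (f x) • b i := by
        refine Finset.sum_congr rfl fun i _ => ?_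
        rw [hx i, Basis.coord_apply]

end AuxStmt17

/-- If the maps `G_f(P) : G_M(P) → G_N(P)` are injective for every finitely generated
`P`, then `R(f) : R(M) → R(N)` is injective (equivalently, the preimage of `I(N)` under
`Sym(f)` is `I(M)`). -/
theorem stmt17 (A : Type) [CommRing A] [IsNoetherianRing A]
    (M N : Type) [AddCommGroup M] [Module A M] [Module.Finite A M]
    [AddCommGroup N] [Module A N] [Module.Finite A N]
    (f : M →ₗ[A] N)
    (h : ∀ (P : Type) [AddCommGroup P] [Module A P] [Module.Finite A P],
      Set.InjOn (LinearMap.lcomp A P f.dualMap) (GFun A M P)) :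
    Function.Injective (reesMap A f) ∧
      Ideal.comap (symMap A f) (reesIdeal A N) = reesIdeal A M := by
  have hsurj : Function.Surjective f.dualMap := dualMap_surjective_of_injOn f h
  have hle : Ideal.comap (symMap A f) (reesIdeal A N) ≤ reesIdeal A M := by
    intro x hx
    rw [Ideal.mem_comap] at hx
    simp only [reesIdeal, Ideal.mem_iInf] at hx ⊢
    intro d
    obtain ⟨g', hg'⟩ := exists_factor_of_dualMap_surjective f hsurj d.E d.g
    rw [RingHom.mem_ker, hg', symMap_comp_apply]
    have hz := hx ⟨d.E, g'⟩
    rw [RingHom.mem_ker] at hz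
    exact hz
  have heq : Ideal.comap (symMap A f) (reesIdeal A N) = reesIdeal A M :=
    le_antisymm hle (reesIdeal_le_comap f)
  refine ⟨?_, heq⟩
  intro a b hab
  obtain ⟨x, rfl⟩ := Ideal.Quotient.mk_surjective a
  obtain ⟨y, rfl⟩ := Ideal.Quotient.mk_surjective b
  have hq : ∀ z : SymmAlg A M,
      reesMap A f (Ideal.Quotient.mk (reesIdeal A M) z) =
        Ideal.Quotient.mk (reesIdeal A N) (symMap A f z) := by
    intro z
    rfl
  rw [hq x, hq y, Ideal.Quotient.eq] at hab
  rw [Ideal.Quotient.eq, ← heq, Ideal.mem_comap, map_sub]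
  exact hab
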